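/- arXiv:2108.03681 — 2 statements merged into one kernel-verified Lean document; each statement's English description precedes it below -/
import Mathlib

section
/- Let V be a Hilbert space and {V_h} a family of closed subspaces such that ‖(I − p_h)w‖_V → 0 as h → 0 for every w ∈ V, where p_h is the orthogonal projection onto V_h. Fix λ and let B(λ), B_h(λ) be as in the Galerkin setting. Then for every fixed v ∈ V (in particular for v in any fixed V_{h₀}), ‖(F(λ) − F_h(λ)) p_h v‖_V → 0 as h → 0, where F(λ) = I − B(λ) and F_h(λ) = I_h − B_h(λ). -/
open Filter

local notation "⟪" x ", " y "⟫" => @inner ℂ _ _ x y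

/-- Auxiliary: the norm of `w - P_K w` is at most `‖w‖`. -/
lemma aux_norm_sub_proj_le {V : Type*} [NormedAddCommGroup V] [InnerProductSpace ℂ V]
    (K : Submodule ℂ V) [CompleteSpace K] (w : V) :
    ‖w - (Submodule.orthogonalProjectionOnto K w : V)‖ ≤ ‖w‖ := by
  rw [← Submodule.starProjection_apply, Submodule.starProjection_minimal]
  refine ciInf_le_of_le ⟨0, ?_⟩ (⟨0, K.zero_mem⟩ : K) (by simp)
  rintro x ⟨y, rfl⟩
  positivity

/-- Pointwise approximation `‖(F(λ) − F_h(λ)) p_h v‖_V → 0` as `h → 0`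
(the family of subspaces is realized as a sequence `V_n` with orthogonal projections
`p_n` converging strongly to the identity), where `F(λ) = I − B(λ)`,
`F_n(λ) = I_n − B_n(λ)` and `B(λ)`, `B_n(λ)` are the Riesz representatives of a fixed
bounded sesquilinear form `b(·,·;λ)` on `V` and `V_n`. -/
theorem stmt8
    (V : Type*) [NormedAddCommGroup V] [InnerProductSpace ℂ V] [CompleteSpace V]
    (Vn : ℕ → Submodule ℂ V) [∀ n, CompleteSpace (Vn n)]
    (happrox : ∀ w : V,
      Tendsto (fun n => ‖w - ((Submodule.orthogonalProjectionOnto (Vn n) w : Vn n) : V)‖) atTop (nhds 0))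
    (b : V → V → ℂ)
    (Cb : ℝ) (hbnd : ∀ u v : V, ‖b u v‖ ≤ Cb * ‖u‖ * ‖v‖)
    (B : V →L[ℂ] V) (hB : ∀ u v : V, ⟪B u, v⟫ = b u v)
    (Bn : ∀ n, Vn n →L[ℂ] Vn n)
    (hBn : ∀ n, ∀ u v : Vn n, ⟪((Bn n u : Vn n) : V), (v : V)⟫ = b (u : V) (v : V)) :
    ∀ v : V,
      Tendsto (fun n =>
        ‖(ContinuousLinearMap.id ℂ V - B) ((Submodule.orthogonalProjectionOnto (Vn n) v : Vn n) : V) -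
          (((ContinuousLinearMap.id ℂ (Vn n) - Bn n)
              (Submodule.orthogonalProjectionOnto (Vn n) v) : Vn n) : V)‖) atTop (nhds 0) := by
  intro v
  -- key identification: `Bn n u = P_n (B u)` for `u ∈ V_n`
  have hBnP : ∀ n, ∀ u : Vn n,
      ((Bn n u : Vn n) : V) = (Submodule.orthogonalProjectionOnto (Vn n) (B (u : V)) : V) := by
    intro n u
    set d : V := ((Bn n u : Vn n) : V) - (Submodule.orthogonalProjectionOnto (Vn n) (B (u : V)) : V) with hd
    have hdmem : d ∈ Vn n := Submodule.sub_mem _ (Submodule.coe_mem _) (Submodule.coe_mem _)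
    have hinner : ∀ w : Vn n, ⟪d, (w : V)⟫ = 0 := by
      intro w
      have h1 : ⟪((Bn n u : Vn n) : V), (w : V)⟫ = b (u : V) (w : V) := hBn n u w
      have h2 : ⟪(Submodule.orthogonalProjectionOnto (Vn n) (B (u : V)) : V), (w : V)⟫ =
          ⟪B (u : V), (w : V)⟫ := by
        have h0 : ⟪B (u : V) - (Submodule.orthogonalProjectionOnto (Vn n) (B (u : V)) : V), (w : V)⟫ = 0 :=
          Submodule.starProjection_inner_eq_zero (B (u : V)) (w : V) w.2
        rw [inner_sub_left, sub_eq_zero] at h0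
        exact h0.symm
      rw [hd, inner_sub_left, h1, h2, hB]
      ring
    have : ⟪d, d⟫ = 0 := hinner ⟨d, hdmem⟩
    have hd0 : d = 0 := inner_self_eq_zero (𝕜 := ℂ) (x := d) |>.mp ‹_›
    exact sub_eq_zero.mp (hd ▸ hd0)
  have hBnP' : ∀ n, ∀ u : Vn n,
      ((Bn n u : Vn n) : V) = (Submodule.orthogonalProjectionOnto (Vn n) (B (u : V)) : V) := hBnP
  -- rewrite the expression
  have hexpr : ∀ n,
      ((ContinuousLinearMap.id ℂ V - B) ((Submodule.orthogonalProjectionOnto (Vn n) v : Vn n) : V) -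
        (((ContinuousLinearMap.id ℂ (Vn n) - Bn n)
            (Submodule.orthogonalProjectionOnto (Vn n) v) : Vn n) : V))
      = (Submodule.orthogonalProjectionOnto (Vn n) (B ((Submodule.orthogonalProjectionOnto (Vn n) v : Vn n) : V)) : V)
          - B ((Submodule.orthogonalProjectionOnto (Vn n) v : Vn n) : V) := by
    intro n
    have := hBnP n (Submodule.orthogonalProjectionOnto (Vn n) v)
    simp only [ContinuousLinearMap.sub_apply, ContinuousLinearMap.id_apply,
      Submodule.coe_sub] at *
    rw [this]
    abel
  -- bound
  set p : ℕ → V → V := fun n w => (Submodule.orthogonalProjectionOnto (Vn n) w : V) with hp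
  have hbound : ∀ n,
      ‖(Submodule.orthogonalProjectionOnto (Vn n) (B (p n v)) : V) - B (p n v)‖ ≤
        ‖B v - (Submodule.orthogonalProjectionOnto (Vn n) (B v) : V)‖ + 2 * (‖B‖ * ‖v - p n v‖) := by
    intro n
    have hdecomp : (Submodule.orthogonalProjectionOnto (Vn n) (B (p n v)) : V) - B (p n v)
        = -((B v - (Submodule.orthogonalProjectionOnto (Vn n) (B v) : V))
            + ((B (p n v - v) - (Submodule.orthogonalProjectionOnto (Vn n) (B (p n v - v)) : V)))) := by
      have h1 : B (p n v) = B v + B (p n v - v) := by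
        rw [← map_add]; congr 1; abel
      rw [h1, map_add, Submodule.coe_add]; abel
    rw [hdecomp, norm_neg]
    calc ‖(B v - (Submodule.orthogonalProjectionOnto (Vn n) (B v) : V))
            + (B (p n v - v) - (Submodule.orthogonalProjectionOnto (Vn n) (B (p n v - v)) : V))‖
        ≤ ‖B v - (Submodule.orthogonalProjectionOnto (Vn n) (B v) : V)‖
            + ‖B (p n v - v) - (Submodule.orthogonalProjectionOnto (Vn n) (B (p n v - v)) : V)‖ :=
          norm_add_le _ _
      _ ≤ ‖B v - (Submodule.orthogonalProjectionOnto (Vn n) (B v) : V)‖ + 2 * (‖B‖ * ‖v - p n v‖) := by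
          refine add_le_add_right ?_ _
          calc ‖B (p n v - v) - (Submodule.orthogonalProjectionOnto (Vn n) (B (p n v - v)) : V)‖
              ≤ ‖B (p n v - v)‖ := aux_norm_sub_proj_le _ _
            _ ≤ ‖B‖ * ‖p n v - v‖ := B.le_opNorm _
            _ = ‖B‖ * ‖v - p n v‖ := by rw [norm_sub_rev]
            _ ≤ 2 * (‖B‖ * ‖v - p n v‖) := by nlinarith [norm_nonneg (v - p n v), norm_nonneg B]
  -- conclusion by squeeze
  have hg : Tendsto (fun n => ‖B v - (Submodule.orthogonalProjectionOnto (Vn n) (B v) : V)‖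
      + 2 * (‖B‖ * ‖v - p n v‖)) atTop (nhds 0) := by
    have h1 := happrox (B v)
    have h2 := (happrox v).const_mul (2 * ‖B‖)
    have := h1.add ((happrox v).const_mul (2 * ‖B‖))
    simpa [hp, mul_assoc, mul_comm, mul_left_comm] using
      h1.add (((happrox v).const_mul ‖B‖).const_mul 2)
  refine squeeze_zero (fun n => norm_nonneg _) (fun n => ?_) hg
  rw [hexpr n]
  exact hbound n
end

section
/- Regularity at resolvent points: Let V be a Hilbert space, V_n ⊂ V closed subspaces with orthogonal projections p_n satisfying ‖(I−p_n)w‖ → 0 for all w ∈ V. Suppose F(λ) ∈ L(V) is boundedly invertible, and F_n(λ) ∈ L(V_n) satisfy (i) ‖(F(λ) − F_n(λ)) w_n‖ → 0 uniformly on bounded sets of the form {v_n − p_n v}, and (ii) ‖p_n F(λ)v − F_n(λ) p_n v‖ → 0 for every v ∈ V. If v_n ∈ V_n is a bounded sequence with ‖F_n(λ) v_n − p_n y‖ → 0 for some y ∈ V, then setting v = F(λ)^{-1} y one has ‖v_n − p_n v‖ → 0. -/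
open Filter

/-- Regularity at resolvent points.  `V` Hilbert, `V_n` closed subspaces
with orthogonal projections `p_n` converging strongly to the identity, `F(λ)` boundedly
invertible with inverse `Finv`, `F_n(λ)` consistent approximations:
(i) `‖(F(λ) − F_n(λ)) w_n‖ → 0` for every bounded sequence `w_n ∈ V_n`, and
(ii) `‖p_n F(λ)v − F_n(λ) p_n v‖ → 0` for every `v ∈ V`.
If `v_n ∈ V_n` is bounded and `‖F_n(λ)v_n − p_n y‖ → 0`, then with `v = F(λ)⁻¹ y` one
has `‖v_n − p_n v‖ → 0`. -/
theorem stmt11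
    (V : Type*) [NormedAddCommGroup V] [InnerProductSpace ℂ V] [CompleteSpace V]
    (Vn : ℕ → Submodule ℂ V) [∀ n, CompleteSpace (Vn n)]
    (happrox : ∀ w : V,
      Tendsto (fun n => ‖w - (((Vn n).orthogonalProjectionOnto w : Vn n) : V)‖) atTop (nhds 0))
    (F Finv : V →L[ℂ] V)
    (hFinv₁ : ∀ x : V, Finv (F x) = x) (hFinv₂ : ∀ x : V, F (Finv x) = x)
    (Fn : ∀ n, Vn n →L[ℂ] Vn n)
    (hconsist₁ : ∀ w : ∀ n, Vn n, (∃ M : ℝ, ∀ n, ‖((w n : Vn n) : V)‖ ≤ M) →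
      Tendsto (fun n => ‖F ((w n : Vn n) : V) - ((Fn n (w n) : Vn n) : V)‖) atTop (nhds 0))
    (hconsist₂ : ∀ v : V,
      Tendsto (fun n =>
        ‖(((Vn n).orthogonalProjectionOnto (F v) : Vn n) : V) -
          ((Fn n ((Vn n).orthogonalProjectionOnto v) : Vn n) : V)‖) atTop (nhds 0))
    (v : ∀ n, Vn n) (hvbdd : ∃ M : ℝ, ∀ n, ‖((v n : Vn n) : V)‖ ≤ M)
    (y : V)
    (hFn : Tendsto (fun n =>
      ‖((Fn n (v n) : Vn n) : V) - (((Vn n).orthogonalProjectionOnto y : Vn n) : V)‖)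
      atTop (nhds 0)) :
    Tendsto (fun n =>
      ‖((v n : Vn n) : V) - (((Vn n).orthogonalProjectionOnto (Finv y) : Vn n) : V)‖)
      atTop (nhds 0) := by
  set u := Finv y with hu
  have hpn_le : ∀ n (x : V), ‖(((Vn n).orthogonalProjectionOnto x : Vn n) : V)‖ ≤ ‖x‖ := by
    intro n x
    have h1 : ‖(((Vn n).orthogonalProjectionOnto x : Vn n) : V)‖
        = ‖(Vn n).orthogonalProjectionOnto x‖ := rfl
    rw [h1]
    calc ‖(Vn n).orthogonalProjectionOnto x‖
        ≤ ‖(Vn n).orthogonalProjectionOnto‖ * ‖x‖ := ((Vn n).orthogonalProjectionOnto).le_opNorm x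
      _ ≤ 1 * ‖x‖ := by gcongr; exact Submodule.orthogonalProjectionOnto_norm_le _
      _ = ‖x‖ := one_mul _
  have h1 := hconsist₁ v hvbdd
  have h4 := hconsist₁ (fun n => (Vn n).orthogonalProjectionOnto u) ⟨‖u‖, fun n => hpn_le n u⟩
  have h3 := hconsist₂ u
  have h2 : Tendsto (fun n => ‖((Fn n (v n) : Vn n) : V)
      - (((Vn n).orthogonalProjectionOnto (F u) : Vn n) : V)‖) atTop (nhds 0) := by
    have hFu : F u = y := hFinv₂ y
    rw [hFu]; exact hFn
  have hFtend : Tendsto (fun n => ‖F ((v n : Vn n) : V)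
      - F (((Vn n).orthogonalProjectionOnto u : Vn n) : V)‖) atTop (nhds 0) := by
    have hsum := ((h1.add h2).add h3).add h4
    simp only [add_zero] at hsum
    refine squeeze_zero (fun n => norm_nonneg _) (fun n => ?_) hsum
    have hdecomp : F ((v n : Vn n) : V) - F (((Vn n).orthogonalProjectionOnto u : Vn n) : V)
        = (F ((v n : Vn n) : V) - ((Fn n (v n) : Vn n) : V))
        + (((Fn n (v n) : Vn n) : V) - (((Vn n).orthogonalProjectionOnto (F u) : Vn n) : V))
        + ((((Vn n).orthogonalProjectionOnto (F u) : Vn n) : V)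
            - ((Fn n ((Vn n).orthogonalProjectionOnto u) : Vn n) : V))
        + (((Fn n ((Vn n).orthogonalProjectionOnto u) : Vn n) : V)
            - F (((Vn n).orthogonalProjectionOnto u : Vn n) : V)) := by abel
    rw [hdecomp]
    refine le_trans (norm_add_le _ _) ?_
    refine add_le_add (le_trans (norm_add_le _ _) (add_le_add (norm_add_le _ _) le_rfl)) ?_
    rw [norm_sub_rev]
  refine squeeze_zero (fun n => norm_nonneg _) (fun n => ?_)
    (by simpa using hFtend.const_mul ‖Finv‖)
  have key : ((v n : Vn n) : V) - (((Vn n).orthogonalProjectionOnto u : Vn n) : V)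
      = Finv (F ((v n : Vn n) : V) - F (((Vn n).orthogonalProjectionOnto u : Vn n) : V)) := by
    rw [map_sub, hFinv₁, hFinv₁]
  rw [key]
  exact Finv.le_opNorm _
end
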